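/- Strong completeness of SDKH: every SDKH-consistent set of DKH-formulas is satisfiable in some pointed model; equivalently, for every set Γ of formulas and formula φ, if Γ semantically entails φ then φ is derivable from Γ in SDKH. -/

import Mathlib

namespace DKH

/-- Groups of agents: subsets of the finite agent set `I = {i_0, …, i_{n-1}}`. -/
abbrev Grp (n : ℕ) := Finset (Fin n)

/-- The language DKH: φ ::= ⊤ | p | ¬φ | (φ∧φ) | K_G φ | Kh_G φ. -/
inductive Formula (P : Type) (n : ℕ) : Type
  | top  : Formula P n
  | atom : P → Formula P n
  | neg  : Formula P n → Formula P n
  | and  : Formula P n → Formula P n → Formula P n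
  | K    : Grp n → Formula P n → Formula P n
  | Kh   : Grp n → Formula P n → Formula P n

instance {P n} : Inhabited (Formula P n) := ⟨.top⟩

namespace Formula
/-- Defined implication φ → ψ := ¬(φ ∧ ¬ψ). -/
def imp {P n} (φ ψ : Formula P n) : Formula P n := .neg (φ.and ψ.neg)
/-- Defined falsum ⊥ := ¬⊤. -/
def bot {P : Type} {n : ℕ} : Formula P n := .neg .top
end Formula

/-- A model ⟨S, {∼_i}, {A_G}, {→_a}, V⟩. -/
structure KhModel (P : Type) (n : ℕ) where
  State : Type
  Act : Type
  sim : Fin n → State → State → Prop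
  sim_equiv : ∀ i, Equivalence (sim i)
  A : Grp n → Set Act
  A_empty : A ∅ = ∅
  A_disj : ∀ G H : Grp n, G ⊂ H → A G ∩ A H = ∅
  tr : Act → State → State → Prop
  V : P → Set State

/-- Distributed indistinguishability: s ∼_G t iff s ∼_i t for every i ∈ G. -/
def gsim {P n} (M : KhModel P n) (G : Grp n) (s t : M.State) : Prop :=
  ∀ i ∈ G, M.sim i s t

/-- Distributed actions: atomic group actions, or joint tuples ⟨d_0,…,d_k⟩. -/
inductive DAct (Act : Type) : Type
  | atom : Act → DAct Act
  | joint : List (DAct Act) → DAct Act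

mutual
/-- Distributed transition relation: →_{⟨d_0,…,d_k⟩} = ⋂_j →_{d_j}. -/
def dtr {Act State : Type} (tr : Act → State → State → Prop) :
    DAct Act → State → State → Prop
  | .atom a, s, t => tr a s t
  | .joint ds, s, t => dtrList tr ds s t

def dtrList {Act State : Type} (tr : Act → State → State → Prop) :
    List (DAct Act) → State → State → Prop
  | [], _, _ => True
  | d :: ds, s, t => dtr tr d s t ∧ dtrList tr ds s t
end

/-- `Gs` is a partial partition of `G`: a family of nonempty, pairwise disjoint
blocks, all included in `G` (i.e. a partition of a subset of `G`). -/
def PartialPartition {n : ℕ} (G : Grp n) (Gs : List (Grp n)) : Prop :=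
  (∀ B ∈ Gs, B ≠ ∅) ∧ Gs.Pairwise (fun B C => Disjoint B C) ∧ (∀ B ∈ Gs, B ⊆ G)

/-- The fixed ordering on mutually disjoint nonempty groups: G ≺ H iff the
minimal index of an agent in G is below that of H. -/
def grpLt {n : ℕ} (B C : Grp n) : Prop := B.min < C.min

/-- Membership in the set A*_G of distributed actions of group G:
the closure of A^+_G = ⋃_{G'⊆G} A_{G'} under forming joint actions
⟨d_0,…,d_k⟩ ∈ A*_{G_0} × ⋯ × A*_{G_k} for non-trivial partial partitions
{G_0,…,G_k} of G listed in the fixed order ≺. -/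
inductive star {n : ℕ} {Act : Type} (A : Grp n → Set Act) : Grp n → DAct Act → Prop
  | base {G G' : Grp n} {a : Act} :
      G' ⊆ G → a ∈ A G' → star A G (.atom a)
  | joint {G : Grp n} {Gs : List (Grp n)} {ds : List (DAct Act)} :
      2 ≤ Gs.length → PartialPartition G Gs → Gs.Chain' grpLt →
      List.Forall₂ (star A) Gs ds → star A G (.joint ds)

/-- Membership in A^+_G = ⋃_{G'⊆G} A_{G'} (as a set of distributed actions). -/
def inAplus {n : ℕ} {Act : Type} (A : Grp n → Set Act) (G : Grp n) (d : DAct Act) : Prop :=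
  ∃ G' : Grp n, G' ⊆ G ∧ ∃ a ∈ A G', d = .atom a

/-- d is executable on X if every s ∈ X has a d-successor. -/
def ExecutableOn {P n} (M : KhModel P n) (d : DAct M.Act) (X : Set M.State) : Prop :=
  ∀ s ∈ X, ∃ t, dtr M.tr d s t

/-- A strategy of group G: a partial function from ∼_G-equivalence classes to
A*_G such that the prescribed action is executable on the class. -/
structure Strategy {P n} (M : KhModel P n) (G : Grp n) where
  act : M.State → Option (DAct M.Act)
  uniform : ∀ s t, gsim M G s t → act s = act t
  mem_star : ∀ s d, act s = some d → star M.A G d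
  exec : ∀ s d, act s = some d → ∀ t, gsim M G s t → ∃ u, dtr M.tr d t u

/-- One step of an execution: [s]_G →_{σ([s]_G)} [t]_G. -/
def stepRel {P n} {M : KhModel P n} {G : Grp n} (σ : Strategy M G) (s t : M.State) : Prop :=
  ∃ d, σ.act s = some d ∧ ∃ u v, gsim M G s u ∧ gsim M G t v ∧ dtr M.tr d u v

/-- Leaf-nodes of the finite complete executions of σ starting from [s]_G,
as a ∼_G-closed set of states. -/
def CELeaf {P n} {M : KhModel P n} {G : Grp n} (σ : Strategy M G) (s : M.State) :
    Set M.State :=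
  {t | ∃ (m : ℕ) (f : ℕ → M.State), gsim M G s (f 0) ∧
    (∀ j < m, stepRel σ (f j) (f (j+1))) ∧ σ.act (f m) = none ∧ gsim M G (f m) t}

/-- There is an infinite (hence complete) execution of σ starting from [s]_G. -/
def InfiniteFrom {P n} {M : KhModel P n} {G : Grp n} (σ : Strategy M G) (s : M.State) : Prop :=
  ∃ f : ℕ → M.State, gsim M G s (f 0) ∧ ∀ j, stepRel σ (f j) (f (j+1))

/-- Inner-nodes of the complete executions of σ starting from [s]_G,
as a ∼_G-closed set of states. -/
def CEInner {P n} {M : KhModel P n} {G : Grp n} (σ : Strategy M G) (s : M.State) :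
    Set M.State :=
  {t | (∃ (m : ℕ) (f : ℕ → M.State), gsim M G s (f 0) ∧
          (∀ j < m, stepRel σ (f j) (f (j+1))) ∧ σ.act (f m) = none ∧
          ∃ j < m, gsim M G (f j) t) ∨
       (∃ f : ℕ → M.State, gsim M G s (f 0) ∧
          (∀ j, stepRel σ (f j) (f (j+1))) ∧ ∃ j, gsim M G (f j) t)}

/-- Truth at a pointed model. -/
def Sat {P n} (M : KhModel P n) : M.State → Formula P n → Prop
  | _, .top => True
  | s, .atom p => s ∈ M.V p
  | s, .neg φ => ¬ Sat M s φ
  | s, .and φ ψ => Sat M s φ ∧ Sat M s ψ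
  | s, .K G φ => ∀ t, gsim M G s t → Sat M t φ
  | s, .Kh G φ => ∃ σ : Strategy M G,
      (∀ t ∈ CELeaf σ s, Sat M t φ) ∧ ¬ InfiniteFrom σ s

/-- Boolean evaluation treating ⊤, ¬, ∧ as connectives and everything else
as atoms; used to define propositional tautologies. -/
def beval {P n} (v : Formula P n → Bool) : Formula P n → Bool
  | .top => true
  | .atom p => v (.atom p)
  | .neg φ => !(beval v φ)
  | .and φ ψ => beval v φ && beval v ψ
  | .K G φ => v (.K G φ)
  | .Kh G φ => v (.Kh G φ)

/-- Instances of propositional tautologies. -/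
def IsTaut {P n} (φ : Formula P n) : Prop := ∀ v, beval v φ = true

/-- The proof system SDKH. -/
inductive Provable {P : Type} {n : ℕ} : Formula P n → Prop
  | taut {φ} : IsTaut φ → Provable φ
  | distK {G : Grp n} {φ ψ} :
      Provable (((Formula.K G φ).and (Formula.K G (φ.imp ψ))).imp (Formula.K G ψ))
  | axT {G : Grp n} {φ} : Provable ((Formula.K G φ).imp φ)
  | ax4 {G : Grp n} {φ} : Provable ((Formula.K G φ).imp (Formula.K G (Formula.K G φ)))
  | ax5 {G : Grp n} {φ} :
      Provable ((Formula.neg (Formula.K G φ)).imp (Formula.K G (Formula.neg (Formula.K G φ))))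
  | axKMono {G H : Grp n} {φ} : G ⊆ H → Provable ((Formula.K G φ).imp (Formula.K H φ))
  | axKhMono {G H : Grp n} {φ} : G ⊆ H → Provable ((Formula.Kh G φ).imp (Formula.Kh H φ))
  | axKtoKh {G : Grp n} {φ} : Provable ((Formula.K G φ).imp (Formula.Kh G φ))
  | axEmpKhtoK {φ} : Provable ((Formula.Kh ∅ φ).imp (Formula.K ∅ φ))
  | axKhtoKKh {G : Grp n} {φ} : Provable ((Formula.Kh G φ).imp (Formula.K G (Formula.Kh G φ)))
  | axEmpMono {G : Grp n} {φ ψ} :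
      Provable ((Formula.K ∅ (φ.imp ψ)).imp (Formula.K ∅ ((Formula.Kh G φ).imp (Formula.Kh G ψ))))
  | axKhbot {G : Grp n} : Provable ((Formula.Kh G Formula.bot).imp Formula.bot)
  | axKhtoKhK {G : Grp n} {φ} : Provable ((Formula.Kh G φ).imp (Formula.Kh G (Formula.K G φ)))
  | axKhKh {G : Grp n} {φ} : Provable ((Formula.Kh G (Formula.Kh G φ)).imp (Formula.Kh G φ))
  | mp {φ ψ} : Provable (φ.imp ψ) → Provable φ → Provable ψ
  | necK {G : Grp n} {φ} : Provable φ → Provable (Formula.K G φ)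

/-- Conjunction of a finite list of formulas. -/
def conj {P n} (L : List (Formula P n)) : Formula P n := L.foldr Formula.and Formula.top

/-- SDKH-consistency of a set of formulas. -/
def Consistent {P n} (X : Set (Formula P n)) : Prop :=
  ¬ ∃ L : List (Formula P n), (∀ φ ∈ L, φ ∈ X) ∧ Provable ((conj L).imp Formula.bot)

/-- Maximal consistent sets. -/
def MCS {P n} (X : Set (Formula P n)) : Prop :=
  Consistent X ∧ ∀ φ ∉ X, ¬ Consistent (insert φ X)

/-! ### The canonical model -/

/-- One step ⟨(φ,G),H⟩X of a mixed sequence. -/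
structure CStep (P : Type) (n : ℕ) where
  fml : Formula P n
  G : Grp n
  H : Grp n
  X : Set (Formula P n)

instance {P n} : Inhabited (CStep P n) := ⟨⟨.top, ∅, ∅, ∅⟩⟩

/-- The conditions on a mixed sequence X_0⟨(φ_1,G_1),H_1⟩X_1⋯⟨(φ_n,G_n),H_n⟩X_n
(the previous MCS being `X`). -/
def goodFrom {P n} : Set (Formula P n) → List (CStep P n) → Prop
  | _, [] => True
  | X, c :: rest =>
      MCS c.X ∧ c.G ≠ ∅ ∧ (Formula.Kh c.G c.fml) ∈ X ∧ (Formula.K c.G c.fml) ∈ c.X ∧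
      (∀ ψ, (Formula.K c.H ψ) ∈ X → ψ ∈ c.X) ∧ goodFrom c.X rest

/-- The final MCS `ed(s)` of a mixed sequence. -/
def edOf {P n} (X0 : Set (Formula P n)) (l : List (CStep P n)) : Set (Formula P n) :=
  l.foldl (fun _ c => c.X) X0

/-- States of the canonical model: mixed sequences starting at X_0. -/
def CState {P : Type} {n : ℕ} (X0 : Set (Formula P n)) := {l : List (CStep P n) // goodFrom X0 l}

/-- Canonical epistemic relation ∼^c_i. -/
def csim {P n} (X0 : Set (Formula P n)) (i : Fin n) (s t : CState X0) : Prop :=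
  ∃ k : ℕ, k ≤ s.1.length ∧ k ≤ t.1.length ∧
    (∀ j < k, (s.1.getD j default).X = (t.1.getD j default).X ∧
              (s.1.getD j default).H = (t.1.getD j default).H) ∧
    (∀ j, k ≤ j → j < s.1.length → i ∈ (s.1.getD j default).H) ∧
    (∀ j, k ≤ j → j < t.1.length → i ∈ (t.1.getD j default).H)

/-- Canonical atomic actions: pairs (φ, G). -/
abbrev CAct (P : Type) (n : ℕ) := Formula P n × Grp n

/-- Canonical atomic action sets A^c_G = {(φ,G) : φ ∈ DKH} for G ≠ ∅, A^c_∅ = ∅. -/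
def cA {P : Type} {n : ℕ} (G : Grp n) : Set (CAct P n) := {a | a.2 = G ∧ G ≠ ∅}

/-- Canonical transition: s →_{(φ,G)} t iff t = s⟨(φ,G),G'⟩X for some G' and MCS X. -/
def ctr {P n} (X0 : Set (Formula P n)) (a : CAct P n) (s t : CState X0) : Prop :=
  ∃ (G' : Grp n) (Y : Set (Formula P n)), MCS Y ∧ t.1 = s.1 ++ [⟨a.1, a.2, G', Y⟩]

theorem csim_equiv {P n} (X0 : Set (Formula P n)) (i : Fin n) : Equivalence (csim X0 i) := by
  constructor
  · intro s
    exact ⟨s.1.length, le_rfl, le_rfl, fun j _ => ⟨rfl, rfl⟩,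
      fun j h1 h2 => absurd h2 (by omega), fun j h1 h2 => absurd h2 (by omega)⟩
  · rintro s t ⟨k, h1, h2, h3, h4, h5⟩
    exact ⟨k, h2, h1, fun j hj => ⟨(h3 j hj).1.symm, (h3 j hj).2.symm⟩, h5, h4⟩
  · rintro s t u ⟨k1, hk1s, hk1t, heq1, hs1, ht1⟩ ⟨k2, hk2t, hk2u, heq2, ht2, hu2⟩
    refine ⟨min k1 k2, le_trans (min_le_left _ _) hk1s, le_trans (min_le_right _ _) hk2u,
      ?_, ?_, ?_⟩
    · intro j hj
      have e1 := heq1 j (lt_of_lt_of_le hj (min_le_left _ _))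
      have e2 := heq2 j (lt_of_lt_of_le hj (min_le_right _ _))
      exact ⟨e1.1.trans e2.1, e1.2.trans e2.2⟩
    · intro j hj hjs
      by_cases h : k1 ≤ j
      · exact hs1 j h hjs
      · have hj2 : k2 ≤ j := by omega
        have hjt : j < t.1.length := by omega
        have := ht2 j hj2 hjt
        have e := (heq1 j (by omega)).2
        rw [e]; exact this
    · intro j hj hju
      by_cases h : k2 ≤ j
      · exact hu2 j h hju
      · have hj1 : k1 ≤ j := by omega
        have hjt : j < t.1.length := by omega
        have := ht1 j hj1 hjt
        have e := (heq2 j (by omega)).2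
        rw [← e]; exact this

theorem cA_empty {P : Type} {n : ℕ} : (cA (P := P) (n := n) ∅) = ∅ := by
  ext a; simp [cA]

theorem cA_disj {P : Type} {n : ℕ} (G H : Grp n) (h : G ⊂ H) :
    cA (P := P) (n := n) G ∩ cA H = ∅ := by
  ext a
  simp only [Set.mem_inter_iff, Set.mem_empty_iff_false, iff_false, cA, Set.mem_setOf_eq]
  rintro ⟨⟨rfl, -⟩, ⟨h2, -⟩⟩
  exact h.ne h2

/-- The canonical model M^c(X_0). -/
def canonicalModel {P : Type} {n : ℕ} (X0 : Set (Formula P n)) : KhModel P n where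
  State := CState X0
  Act := CAct P n
  sim := csim X0
  sim_equiv := csim_equiv X0
  A := cA
  A_empty := cA_empty
  A_disj := cA_disj
  tr := ctr X0
  V := fun p => {s : CState X0 | Formula.atom p ∈ edOf X0 s.1}


/-! ### Auxiliary development for the completeness proof -/

section Toolkit

variable {P : Type} {n : ℕ}

open Formula

lemma beval_imp (v : Formula P n → Bool) (a b : Formula P n) :
    beval v (a.imp b) = (!(beval v a) || beval v b) := by
  simp only [Formula.imp, beval]
  cases beval v a <;> cases beval v b <;> rfl

lemma beval_bot (v : Formula P n → Bool) : beval v (Formula.bot : Formula P n) = false := rfl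

lemma pl_trans (a b c : Formula P n) :
    Provable ((a.imp b).imp ((b.imp c).imp (a.imp c))) := by
  apply Provable.taut; intro v
  simp only [beval_imp]
  cases beval v a <;> cases beval v b <;> cases beval v c <;> rfl

lemma prov_trans {a b c : Formula P n} (h1 : Provable (a.imp b)) (h2 : Provable (b.imp c)) :
    Provable (a.imp c) :=
  Provable.mp (Provable.mp (pl_trans a b c) h1) h2

lemma pl_andL (a b : Formula P n) : Provable ((a.and b).imp a) := by
  apply Provable.taut; intro v
  simp only [beval_imp, beval]
  cases beval v a <;> cases beval v b <;> rfl

lemma pl_andR (a b : Formula P n) : Provable ((a.and b).imp b) := by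
  apply Provable.taut; intro v
  simp only [beval_imp, beval]
  cases beval v a <;> cases beval v b <;> rfl

lemma pl_andIntro (c a b : Formula P n) :
    Provable ((c.imp a).imp ((c.imp b).imp (c.imp (a.and b)))) := by
  apply Provable.taut; intro v
  simp only [beval_imp, beval]
  cases beval v a <;> cases beval v b <;> cases beval v c <;> rfl

lemma pl_toTop (a : Formula P n) : Provable (a.imp Formula.top) := by
  apply Provable.taut; intro v
  simp only [beval_imp, beval]
  cases beval v a <;> rfl

lemma pl_weaken {a b : Formula P n} (h : Provable b) : Provable (a.imp b) := by
  refine Provable.mp ?_ h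
  apply Provable.taut; intro v
  simp only [beval_imp]
  cases beval v a <;> cases beval v b <;> rfl

lemma pl_negIntro (a c : Formula P n) :
    Provable (((a.and c).imp Formula.bot).imp (c.imp a.neg)) := by
  apply Provable.taut; intro v
  simp only [beval_imp, beval_bot, beval]
  cases beval v a <;> cases beval v c <;> rfl

lemma pl_negElim (a c : Formula P n) :
    Provable (((a.neg.and c).imp Formula.bot).imp (c.imp a)) := by
  apply Provable.taut; intro v
  simp only [beval_imp, beval_bot, beval]
  cases beval v a <;> cases beval v c <;> rfl

lemma pl_impBot (a c : Formula P n) :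
    Provable (((a.and c).imp Formula.bot).imp (c.imp (a.imp Formula.bot))) := by
  apply Provable.taut; intro v
  simp only [beval_imp, beval_bot, beval]
  cases beval v a <;> cases beval v c <;> rfl

lemma pl_impIntro2 (a b c : Formula P n) :
    Provable (((a.and (b.neg.and c)).imp Formula.bot).imp (c.imp (a.imp b))) := by
  apply Provable.taut; intro v
  simp only [beval_imp, beval_bot, beval]
  cases beval v a <;> cases beval v b <;> cases beval v c <;> rfl

lemma pl_pair (a b : Formula P n) : Provable (a.imp (b.imp (a.and b))) := by
  apply Provable.taut; intro v
  simp only [beval_imp, beval]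
  cases beval v a <;> cases beval v b <;> rfl

lemma pl_contraImp (c x : Formula P n) :
    Provable ((c.imp x).imp ((c.imp x.neg).imp (c.imp Formula.bot))) := by
  apply Provable.taut; intro v
  simp only [beval_imp, beval_bot, beval]
  cases beval v c <;> cases beval v x <;> rfl

lemma pl_kchain (x p y q z : Formula P n) :
    Provable (x.imp ((((p.and x).imp y)).imp ((((q.and y).imp z)).imp ((p.and q).imp z)))) := by
  apply Provable.taut; intro v
  simp only [beval_imp, beval]
  cases beval v x <;> cases beval v p <;> cases beval v y <;> cases beval v q <;>
    cases beval v z <;> rfl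

/-- Projection out of a conjunction. -/
lemma conj_proj {L : List (Formula P n)} {ψ : Formula P n} (h : ψ ∈ L) :
    Provable ((conj L).imp ψ) := by
  induction L with
  | nil => cases h
  | cons a L ih =>
    rcases List.mem_cons.mp h with h | h
    · subst h; exact pl_andL ψ (conj L)
    · exact prov_trans (pl_andR a (conj L)) (ih h)

/-- Pointwise introduction of a conjunction. -/
lemma conj_intro {χ : Formula P n} {L : List (Formula P n)}
    (h : ∀ ψ ∈ L, Provable (χ.imp ψ)) : Provable (χ.imp (conj L)) := by
  induction L with
  | nil => exact pl_toTop χ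
  | cons a L ih =>
    have h1 : Provable (χ.imp a) := h a List.mem_cons_self
    have h2 : Provable (χ.imp (conj L)) := ih fun ψ hψ => h ψ (List.mem_cons_of_mem a hψ)
    exact Provable.mp (Provable.mp (pl_andIntro χ a (conj L)) h1) h2

lemma conj_mono {L1 L2 : List (Formula P n)} (h : ∀ ψ ∈ L1, ψ ∈ L2) :
    Provable ((conj L2).imp (conj L1)) :=
  conj_intro fun ψ hψ => conj_proj (h ψ hψ)

end Toolkit

section MCSTheory

variable {P : Type} {n : ℕ}

open Formula

/-- Extract: from a list inside `insert χ S`, a list inside `S` such that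
`χ :: L'` proves `conj L`. -/
lemma extract_insert {S : Set (Formula P n)} {χ : Formula P n} {L : List (Formula P n)}
    (hL : ∀ ψ ∈ L, ψ ∈ insert χ S) :
    ∃ L' : List (Formula P n), (∀ ψ ∈ L', ψ ∈ S) ∧
      Provable ((conj (χ :: L')).imp (conj L)) := by
  classical
  refine ⟨L.filter (fun ψ => ψ ≠ χ), ?_, ?_⟩
  · intro ψ hψ
    have h1 := List.mem_filter.mp hψ
    have h2 : ψ ≠ χ := by simpa using h1.2
    rcases hL ψ h1.1 with h | h
    · exact absurd h h2
    · exact h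
  · apply conj_intro
    intro ψ hψ
    by_cases hc : ψ = χ
    · subst hc; exact conj_proj (List.mem_cons_self)
    · refine conj_proj (List.mem_cons_of_mem _ ?_)
      exact List.mem_filter.mpr ⟨hψ, by simpa using hc⟩

/-- If no finite subset of S proves χ, then `insert χ.neg S` is consistent. -/
lemma consistent_insert_neg {S : Set (Formula P n)} {χ : Formula P n}
    (h : ¬ ∃ L : List (Formula P n), (∀ ψ ∈ L, ψ ∈ S) ∧ Provable ((conj L).imp χ)) :
    Consistent (insert χ.neg S) := by
  rintro ⟨L, hL, hp⟩
  obtain ⟨L', hL', hch⟩ := extract_insert hL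
  have hb : Provable ((conj (χ.neg :: L')).imp Formula.bot) := prov_trans hch hp
  have : Provable ((conj L').imp χ) :=
    Provable.mp (pl_negElim χ (conj L')) hb
  exact h ⟨L', hL', this⟩

/-- MCSs are closed under derivation from finite subsets. -/
lemma mcs_closed {X : Set (Formula P n)} (hX : MCS X) {L : List (Formula P n)}
    {χ : Formula P n} (hL : ∀ ψ ∈ L, ψ ∈ X) (hp : Provable ((conj L).imp χ)) : χ ∈ X := by
  by_contra hχ
  have hnc := hX.2 χ hχ
  rw [Consistent, not_not] at hnc
  obtain ⟨L2, hL2, hp2⟩ := hnc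
  obtain ⟨L2', hL2', hch⟩ := extract_insert hL2
  have hb : Provable ((conj (χ :: L2')).imp Formula.bot) := prov_trans hch hp2
  have hneg : Provable ((conj L2').imp χ.neg) := Provable.mp (pl_negIntro χ (conj L2')) hb
  -- L ++ L2' ⊆ X proves both χ and χ.neg
  have hpos : Provable ((conj (L ++ L2')).imp χ) :=
    prov_trans (conj_mono (fun ψ hψ => List.mem_append_left _ hψ)) hp
  have hneg' : Provable ((conj (L ++ L2')).imp χ.neg) :=
    prov_trans (conj_mono (fun ψ hψ => List.mem_append_right _ hψ)) hneg
  have hbot : Provable ((conj (L ++ L2')).imp Formula.bot) :=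
    Provable.mp (Provable.mp (pl_contraImp (conj (L ++ L2')) χ) hpos) hneg'
  exact hX.1 ⟨L ++ L2', by
    intro ψ hψ
    rcases List.mem_append.mp hψ with h | h
    · exact hL ψ h
    · exact hL2' ψ h, hbot⟩

lemma mcs_prov_mem {X : Set (Formula P n)} (hX : MCS X) {χ : Formula P n}
    (h : Provable χ) : χ ∈ X :=
  mcs_closed hX (L := []) (fun ψ hψ => by cases hψ) (pl_weaken h)

lemma mcs_mp_prov {X : Set (Formula P n)} (hX : MCS X) {a b : Formula P n}
    (hab : Provable (a.imp b)) (ha : a ∈ X) : b ∈ X := by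
  refine mcs_closed hX (L := [a]) ?_ ?_
  · intro ψ hψ
    rw [List.mem_singleton] at hψ; subst hψ; exact ha
  · exact prov_trans (pl_andL a Formula.top) hab

lemma mcs_mem_or_neg {X : Set (Formula P n)} (hX : MCS X) (χ : Formula P n) :
    χ ∈ X ∨ χ.neg ∈ X := by
  by_cases h : χ ∈ X
  · exact Or.inl h
  · right
    have hnc := hX.2 χ h
    rw [Consistent, not_not] at hnc
    obtain ⟨L2, hL2, hp2⟩ := hnc
    obtain ⟨L2', hL2', hch⟩ := extract_insert hL2
    have hb : Provable ((conj (χ :: L2')).imp Formula.bot) := prov_trans hch hp2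
    have hneg : Provable ((conj L2').imp χ.neg) := Provable.mp (pl_negIntro χ (conj L2')) hb
    exact mcs_closed hX hL2' hneg

lemma mcs_not_both {X : Set (Formula P n)} (hX : MCS X) {χ : Formula P n}
    (h1 : χ ∈ X) (h2 : χ.neg ∈ X) : False := by
  refine hX.1 ⟨[χ, χ.neg], ?_, ?_⟩
  · intro ψ hψ
    simp only [List.mem_cons, List.mem_singleton, List.not_mem_nil, or_false] at hψ
    rcases hψ with rfl | rfl
    · exact h1
    · exact h2
  · apply Provable.taut; intro v
    simp only [conj, List.foldr, beval_imp, beval_bot, beval]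
    cases beval v χ <;> rfl

lemma mcs_neg_iff {X : Set (Formula P n)} (hX : MCS X) {χ : Formula P n} :
    χ.neg ∈ X ↔ χ ∉ X := by
  constructor
  · intro h hc; exact mcs_not_both hX hc h
  · intro h; rcases mcs_mem_or_neg hX χ with h' | h'
    · exact absurd h' h
    · exact h'

lemma mcs_bot_not_mem {X : Set (Formula P n)} (hX : MCS X) : Formula.bot ∉ X := by
  intro h
  refine hX.1 ⟨[Formula.bot], fun ψ hψ => by
    rw [List.mem_singleton] at hψ; subst hψ; exact h, ?_⟩
  exact pl_andL _ _

lemma mcs_mp {X : Set (Formula P n)} (hX : MCS X) {a b : Formula P n}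
    (h1 : a.imp b ∈ X) (h2 : a ∈ X) : b ∈ X := by
  refine mcs_closed hX (L := [a.imp b, a]) ?_ ?_
  · intro ψ hψ
    simp only [List.mem_cons, List.mem_singleton, List.not_mem_nil, or_false] at hψ
    rcases hψ with rfl | rfl
    · exact h1
    · exact h2
  · apply Provable.taut; intro v
    simp only [conj, List.foldr, beval_imp, beval]
    cases beval v a <;> cases beval v b <;> rfl

lemma mcs_and_mem {X : Set (Formula P n)} (hX : MCS X) {a b : Formula P n}
    (h1 : a ∈ X) (h2 : b ∈ X) : a.and b ∈ X := by
  refine mcs_closed hX (L := [a, b]) ?_ ?_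
  · intro ψ hψ
    simp only [List.mem_cons, List.mem_singleton, List.not_mem_nil, or_false] at hψ
    rcases hψ with rfl | rfl
    · exact h1
    · exact h2
  · apply Provable.taut; intro v
    simp only [conj, List.foldr, beval_imp, beval]
    cases beval v a <;> cases beval v b <;> rfl

lemma mcs_and_iff {X : Set (Formula P n)} (hX : MCS X) {a b : Formula P n} :
    a.and b ∈ X ↔ a ∈ X ∧ b ∈ X := by
  constructor
  · intro h
    exact ⟨mcs_mp_prov hX (pl_andL a b) h, mcs_mp_prov hX (pl_andR a b) h⟩
  · rintro ⟨h1, h2⟩; exact mcs_and_mem hX h1 h2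

/-- K distributes over finite conjunctions inside an MCS. -/
lemma mcs_K_and {X : Set (Formula P n)} (hX : MCS X) {G : Grp n} {a b : Formula P n}
    (h1 : Formula.K G a ∈ X) (h2 : Formula.K G b ∈ X) : Formula.K G (a.and b) ∈ X := by
  have P1 : Provable (Formula.K G (a.imp (b.imp (a.and b)))) := Provable.necK (pl_pair a b)
  have P2 : Provable (((Formula.K G a).and (Formula.K G (a.imp (b.imp (a.and b))))).imp
      (Formula.K G (b.imp (a.and b)))) := Provable.distK
  have P3 : Provable (((Formula.K G b).and (Formula.K G (b.imp (a.and b)))).imp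
      (Formula.K G (a.and b))) := Provable.distK
  have h3 : Formula.K G (a.imp (b.imp (a.and b))) ∈ X := mcs_prov_mem hX P1
  have h4 : Formula.K G (b.imp (a.and b)) ∈ X :=
    mcs_mp_prov hX P2 (mcs_and_mem hX h1 h3)
  exact mcs_mp_prov hX P3 (mcs_and_mem hX h2 h4)

lemma mcs_K_conj_aux {X : Set (Formula P n)} (hX : MCS X) {G : Grp n}
    (L : List (Formula P n)) (hL : ∀ ψ ∈ L, Formula.K G ψ ∈ X) :
    Formula.K G (conj L) ∈ X := by
  induction L with
  | nil => exact mcs_prov_mem hX (Provable.necK (Provable.taut (fun v => rfl)))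
  | cons a L ih =>
    exact mcs_K_and hX (hL a (List.mem_cons_self))
      (ih fun ψ hψ => hL ψ (List.mem_cons_of_mem a hψ))

lemma mcs_K_conj {X : Set (Formula P n)} (hX : MCS X) {G : Grp n}
    {L : List (Formula P n)} {χ : Formula P n}
    (hL : ∀ ψ ∈ L, Formula.K G ψ ∈ X) (hp : Provable ((conj L).imp χ)) :
    Formula.K G χ ∈ X := by
  have hKconj : Formula.K G (conj L) ∈ X := mcs_K_conj_aux hX L hL
  have h1 : Formula.K G ((conj L).imp χ) ∈ X := mcs_prov_mem hX (Provable.necK hp)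
  exact mcs_mp_prov hX Provable.distK (mcs_and_mem hX hKconj h1)

/-- In a chain of sets, any finite list of elements of the union lies in one member. -/
lemma chain_finite_mem {α : Type*} {c : Set (Set α)} (hchain : IsChain (· ⊆ ·) c)
    {T0 : Set α} (hT0 : T0 ∈ c) (L : List α) (hL : ∀ ψ ∈ L, ∃ T ∈ c, ψ ∈ T) :
    ∃ T ∈ c, ∀ ψ ∈ L, ψ ∈ T := by
  have hdir : DirectedOn (· ⊆ ·) c := hchain.directedOn
  induction L with
  | nil => exact ⟨T0, hT0, by simp⟩
  | cons a L ih =>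
    obtain ⟨T1, hT1, hT1'⟩ := ih (fun ψ hψ => hL ψ (List.mem_cons_of_mem a hψ))
    obtain ⟨T2, hT2c, hT2⟩ := hL a (List.mem_cons_self)
    obtain ⟨T3, hT3c, h13, h23⟩ := hdir T1 hT1 T2 hT2c
    refine ⟨T3, hT3c, fun ψ hψ => ?_⟩
    rcases List.mem_cons.mp hψ with h | h
    · exact h ▸ h23 hT2
    · exact h13 (hT1' ψ h)

/-- Lindenbaum's lemma. -/
lemma lindenbaum {S : Set (Formula P n)} (hS : Consistent S) :
    ∃ X : Set (Formula P n), S ⊆ X ∧ MCS X := by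
  obtain ⟨X, hsub, hmem, hmax⟩ := zorn_subset_nonempty
    {T : Set (Formula P n) | S ⊆ T ∧ Consistent T}
    (fun c hc hchain hne => by
      obtain ⟨T0, hT0⟩ := hne
      refine ⟨⋃₀ c, ⟨?_, ?_⟩, fun s hs => Set.subset_sUnion_of_mem hs⟩
      · exact (hc hT0).1.trans (Set.subset_sUnion_of_mem hT0)
      · rintro ⟨L, hL, hp⟩
        obtain ⟨T', hT'c, hT'⟩ := chain_finite_mem hchain hT0 L
          (fun ψ hψ => Set.mem_sUnion.mp (hL ψ hψ))
        exact (hc hT'c).2 ⟨L, hT', hp⟩)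
    S ⟨Set.Subset.rfl, hS⟩
  refine ⟨X, hsub, hmem.2, ?_⟩
  intro φ hφ hcons
  have hle : X ⊆ insert φ X := Set.subset_insert _ _
  have := hmax ⟨hmem.1.trans (Set.subset_insert _ _), hcons⟩ hle
  exact hφ (this (Set.mem_insert _ _))

end MCSTheory

section Model

variable {P : Type} {n : ℕ}

open Formula

/-- Goodness of mixed sequences (without requiring the acting group nonempty). -/
def Good : Set (Formula P n) → List (CStep P n) → Prop
  | _, [] => True
  | X, c :: rest =>
      MCS c.X ∧ (Formula.Kh c.G c.fml) ∈ X ∧ (Formula.K c.G c.fml) ∈ c.X ∧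
      (∀ ψ, (Formula.K c.H ψ) ∈ X → ψ ∈ c.X) ∧ Good c.X rest

lemma edOf_cons (X : Set (Formula P n)) (c : CStep P n) (l : List (CStep P n)) :
    edOf X (c :: l) = edOf c.X l := rfl

lemma edOf_append (X : Set (Formula P n)) (l : List (CStep P n)) (c : CStep P n) :
    edOf X (l ++ [c]) = c.X := by
  simp [edOf, List.foldl_append]

lemma good_append {X0 : Set (Formula P n)} :
    ∀ (l : List (CStep P n)) (c : CStep P n),
    Good X0 (l ++ [c]) ↔ Good X0 l ∧ (MCS c.X ∧ (Formula.Kh c.G c.fml) ∈ edOf X0 l ∧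
      (Formula.K c.G c.fml) ∈ c.X ∧ (∀ ψ, (Formula.K c.H ψ) ∈ edOf X0 l → ψ ∈ c.X)) := by
  intro l
  induction l generalizing X0 with
  | nil =>
    intro c
    simp only [List.nil_append]
    show (MCS c.X ∧ (Formula.Kh c.G c.fml) ∈ X0 ∧ (Formula.K c.G c.fml) ∈ c.X ∧
      (∀ ψ, (Formula.K c.H ψ) ∈ X0 → ψ ∈ c.X) ∧ True) ↔ _
    show _ ↔ (True ∧ _)
    tauto
  | cons c' l ih =>
    intro c
    show Good X0 (c' :: (l ++ [c])) ↔ _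
    rw [show edOf X0 (c' :: l) = edOf c'.X l from rfl]
    constructor
    · rintro ⟨h1, h2, h3, h4, h5⟩
      obtain ⟨hg, hrest⟩ := (ih c).mp h5
      exact ⟨⟨h1, h2, h3, h4, hg⟩, hrest⟩
    · rintro ⟨⟨h1, h2, h3, h4, hg⟩, hrest⟩
      exact ⟨h1, h2, h3, h4, (ih c).mpr ⟨hg, hrest⟩⟩

lemma mcs_edOf :
    ∀ (l : List (CStep P n)) (X : Set (Formula P n)), MCS X → Good X l → MCS (edOf X l) := by
  intro l
  induction l with
  | nil => intro X hX _; exact hX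
  | cons c l ih =>
    intro X hX hg
    exact ih c.X hg.1 hg.2.2.2.2

lemma edOf_getD :
    ∀ (l : List (CStep P n)) (X : Set (Formula P n)), l ≠ [] →
      edOf X l = (l.getD (l.length - 1) default).X := by
  intro l
  induction l with
  | nil => intro X h; exact absurd rfl h
  | cons c l ih =>
    intro X _
    rw [edOf_cons]
    cases hl : l with
    | nil => subst hl; simp [edOf]
    | cons c' l' =>
      subst hl
      rw [ih c.X (by simp)]
      have h1 : (c :: c' :: l').length - 1 = ((c' :: l').length - 1) + 1 := by simp
      rw [h1, List.getD_cons_succ]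

/-- The epistemic relation on raw mixed sequences. -/
def lsim (i : Fin n) (l m : List (CStep P n)) : Prop :=
  ∃ k : ℕ, k ≤ l.length ∧ k ≤ m.length ∧
    (∀ j < k, (l.getD j default).X = (m.getD j default).X ∧
              (l.getD j default).H = (m.getD j default).H) ∧
    (∀ j, k ≤ j → j < l.length → i ∈ (l.getD j default).H) ∧
    (∀ j, k ≤ j → j < m.length → i ∈ (m.getD j default).H)

theorem lsim_equiv (i : Fin n) : Equivalence (lsim (P := P) i) := by
  constructor
  · intro s
    exact ⟨s.length, le_rfl, le_rfl, fun j _ => ⟨rfl, rfl⟩,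
      fun j h1 h2 => absurd h2 (by omega), fun j h1 h2 => absurd h2 (by omega)⟩
  · rintro s t ⟨k, h1, h2, h3, h4, h5⟩
    exact ⟨k, h2, h1, fun j hj => ⟨(h3 j hj).1.symm, (h3 j hj).2.symm⟩, h5, h4⟩
  · rintro s t u ⟨k1, hk1s, hk1t, heq1, hs1, ht1⟩ ⟨k2, hk2t, hk2u, heq2, ht2, hu2⟩
    refine ⟨min k1 k2, le_trans (min_le_left _ _) hk1s, le_trans (min_le_right _ _) hk2u,
      ?_, ?_, ?_⟩
    · intro j hj
      have e1 := heq1 j (lt_of_lt_of_le hj (min_le_left _ _))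
      have e2 := heq2 j (lt_of_lt_of_le hj (min_le_right _ _))
      exact ⟨e1.1.trans e2.1, e1.2.trans e2.2⟩
    · intro j hj hjs
      by_cases h : k1 ≤ j
      · exact hs1 j h hjs
      · have hj2 : k2 ≤ j := by omega
        have hjt : j < t.length := by omega
        have := ht2 j hj2 hjt
        have e := (heq1 j (by omega)).2
        rw [e]; exact this
    · intro j hj hju
      by_cases h : k2 ≤ j
      · exact hu2 j h hju
      · have hj1 : k1 ≤ j := by omega
        have hjt : j < t.length := by omega
        have := ht1 j hj1 hjt
        have e := (heq2 j (by omega)).2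
        rw [← e]; exact this

/-- States of our model. -/
def MSt (X0 : Set (Formula P n)) := {l : List (CStep P n) // Good X0 l}

/-- Transitions of our model. -/
def mtr (X0 : Set (Formula P n)) (a : CAct P n) (s t : MSt X0) : Prop :=
  ∃ (H : Grp n) (Y : Set (Formula P n)), t.1 = s.1 ++ [⟨a.1, a.2, H, Y⟩]

/-- Our model. -/
def myModel (X0 : Set (Formula P n)) : KhModel P n where
  State := MSt X0
  Act := CAct P n
  sim := fun i s t => lsim i s.1 t.1
  sim_equiv := fun i =>
    ⟨fun s => (lsim_equiv i).refl s.1, fun h => (lsim_equiv i).symm h,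
      fun h h' => (lsim_equiv i).trans h h'⟩
  A := cA
  A_empty := cA_empty
  A_disj := cA_disj
  tr := mtr X0
  V := fun p => {s : MSt X0 | Formula.atom p ∈ edOf X0 s.1}

lemma gsim_my {X0 : Set (Formula P n)} {G : Grp n} {s t : MSt X0} :
    gsim (myModel X0) G s t ↔ ∀ i ∈ G, lsim i s.1 t.1 := Iff.rfl

lemma gsim_my_refl {X0 : Set (Formula P n)} {G : Grp n} (s : MSt X0) :
    gsim (myModel X0) G s s := fun i _ => (lsim_equiv i).refl s.1

lemma gsim_my_symm {X0 : Set (Formula P n)} {G : Grp n} {s t : MSt X0}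
    (h : gsim (myModel X0) G s t) : gsim (myModel X0) G t s :=
  fun i hi => (lsim_equiv i).symm (h i hi)

lemma gsim_my_trans {X0 : Set (Formula P n)} {G : Grp n} {s t u : MSt X0}
    (h1 : gsim (myModel X0) G s t) (h2 : gsim (myModel X0) G t u) :
    gsim (myModel X0) G s u :=
  fun i hi => (lsim_equiv i).trans (h1 i hi) (h2 i hi)

/-- One-step transfer of `K G`-formulas across a good step. -/
lemma step_transfer {Y X : Set (Formula P n)} (hY : MCS Y) (hX : MCS X) {G H : Grp n}
    (hGH : G ⊆ H) (htr : ∀ ψ, Formula.K H ψ ∈ Y → ψ ∈ X) (χ : Formula P n) :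
    Formula.K G χ ∈ Y ↔ Formula.K G χ ∈ X := by
  constructor
  · intro h
    have h4 : Formula.K G (Formula.K G χ) ∈ Y := mcs_mp_prov hY Provable.ax4 h
    have h5 : Formula.K H (Formula.K G χ) ∈ Y := mcs_mp_prov hY (Provable.axKMono hGH) h4
    exact htr _ h5
  · intro h
    by_contra hc
    have h1 : (Formula.K G χ).neg ∈ Y := (mcs_neg_iff hY).mpr hc
    have h2 : Formula.K G ((Formula.K G χ).neg) ∈ Y := mcs_mp_prov hY Provable.ax5 h1
    have h3 : Formula.K H ((Formula.K G χ).neg) ∈ Y := mcs_mp_prov hY (Provable.axKMono hGH) h2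
    exact mcs_not_both hX h (htr _ h3)

/-- `K G`-membership only depends on the sequence up to the point from which `G ⊆ H`. -/
lemma K_edOf_take {G : Grp n} {χ : Formula P n} :
    ∀ (l : List (CStep P n)) (X : Set (Formula P n)) (k : ℕ), MCS X → Good X l →
    (∀ j, k ≤ j → j < l.length → G ⊆ (l.getD j default).H) →
    (Formula.K G χ ∈ edOf X l ↔ Formula.K G χ ∈ edOf X (l.take k)) := by
  intro l
  induction l with
  | nil => intro X k _ _ _; simp
  | cons c rest ih =>
    intro X k hX hg hcond
    obtain ⟨hmcs, _, _, htr, hgood⟩ := hg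
    cases k with
    | zero =>
      have h0 : G ⊆ c.H := hcond 0 le_rfl (by simp)
      have hmain := ih c.X 0 hmcs hgood (fun j hj hlen => by
        have := hcond (j + 1) (by omega) (by simpa using hlen)
        simpa using this)
      rw [edOf_cons, hmain]
      simp only [List.take_zero, List.take]
      rw [show edOf c.X ([] : List (CStep P n)) = c.X from rfl,
          show edOf X ([] : List (CStep P n)) = X from rfl]
      exact (step_transfer hX hmcs h0 htr χ).symm
    | succ k =>
      have hmain := ih c.X k hmcs hgood (fun j hj hlen => by
        have := hcond (j + 1) (by omega) (by simpa using hlen)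
        simpa using this)
      rw [edOf_cons, hmain]
      rfl

/-- Common witness index for a group of agents. -/
lemma lsim_common {G : Grp n} {l m : List (CStep P n)}
    (h : ∀ i ∈ G, lsim i l m) :
    ∃ k, k ≤ l.length ∧ k ≤ m.length ∧
      (∀ j < k, (l.getD j default).X = (m.getD j default).X ∧
                (l.getD j default).H = (m.getD j default).H) ∧
      (∀ j, k ≤ j → j < l.length → G ⊆ (l.getD j default).H) ∧
      (∀ j, k ≤ j → j < m.length → G ⊆ (m.getD j default).H) := by
  induction G using Finset.induction_on with
  | empty =>
    exact ⟨0, Nat.zero_le _, Nat.zero_le _, fun j hj => absurd hj (by omega),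
      fun j _ _ => Finset.empty_subset _, fun j _ _ => Finset.empty_subset _⟩
  | @insert i G hni ih =>
    obtain ⟨k1, hk1l, hk1m, heq1, hl1, hm1⟩ := ih (fun i' hi' => h i' (Finset.mem_insert_of_mem hi'))
    obtain ⟨k2, hk2l, hk2m, heq2, hl2, hm2⟩ := h i (Finset.mem_insert_self _ _)
    refine ⟨max k1 k2, max_le hk1l hk2l, max_le hk1m hk2m, ?_, ?_, ?_⟩
    · intro j hj
      rcases max_cases k1 k2 with ⟨hm, _⟩ | ⟨hm, _⟩
      · exact heq1 j (by omega)
      · exact heq2 j (by omega)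
    · intro j hj hlen
      rw [Finset.insert_subset_iff]
      exact ⟨hl2 j (le_trans (le_max_right _ _) hj) hlen,
        hl1 j (le_trans (le_max_left _ _) hj) hlen⟩
    · intro j hj hlen
      rw [Finset.insert_subset_iff]
      exact ⟨hm2 j (le_trans (le_max_right _ _) hj) hlen,
        hm1 j (le_trans (le_max_left _ _) hj) hlen⟩

lemma edOf_take_eq {X0 : Set (Formula P n)} {l m : List (CStep P n)} {k : ℕ}
    (hk1 : k ≤ l.length) (hk2 : k ≤ m.length)
    (heq : ∀ j < k, (l.getD j default).X = (m.getD j default).X) :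
    edOf X0 (l.take k) = edOf X0 (m.take k) := by
  cases k with
  | zero => simp
  | succ k =>
    have hl : l.take (k + 1) ≠ [] := by
      intro h
      have h2 : (l.take (k + 1)).length = 0 := by rw [h]; rfl
      rw [List.length_take] at h2
      omega
    have hm : m.take (k + 1) ≠ [] := by
      intro h
      have h2 : (m.take (k + 1)).length = 0 := by rw [h]; rfl
      rw [List.length_take] at h2
      omega
    rw [edOf_getD _ _ hl, edOf_getD _ _ hm]
    have hll : (l.take (k + 1)).length = k + 1 := by simp; omega
    have hml : (m.take (k + 1)).length = k + 1 := by simp; omega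
    rw [hll, hml]
    have h1 : (l.take (k + 1)).getD k default = l.getD k default := by
      simp only [List.getD_eq_getElem?_getD]
      rw [List.getElem?_take_of_lt (by omega)]
    have h2 : (m.take (k + 1)).getD k default = m.getD k default := by
      simp only [List.getD_eq_getElem?_getD]
      rw [List.getElem?_take_of_lt (by omega)]
    simp only [Nat.add_sub_cancel, h1, h2]
    exact heq k (by omega)

/-- Key lemma: `∼_G`-related states share their `K_G`-theory. -/
lemma gsim_K_iff {X0 : Set (Formula P n)} (hX0 : MCS X0) {G : Grp n} {s t : MSt X0}
    (h : gsim (myModel X0) G s t) (χ : Formula P n) :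
    Formula.K G χ ∈ edOf X0 s.1 ↔ Formula.K G χ ∈ edOf X0 t.1 := by
  obtain ⟨k, hkl, hkm, heq, hcl, hcm⟩ := lsim_common (G := G) (l := s.1) (m := t.1) h
  rw [K_edOf_take s.1 X0 k hX0 s.2 hcl, K_edOf_take t.1 X0 k hX0 t.2 hcm,
    edOf_take_eq hkl hkm (fun j hj => (heq j hj).1)]

lemma gsim_K_mem {X0 : Set (Formula P n)} (hX0 : MCS X0) {G : Grp n} {s t : MSt X0}
    (h : gsim (myModel X0) G s t) {χ : Formula P n}
    (hK : Formula.K G χ ∈ edOf X0 s.1) : χ ∈ edOf X0 t.1 := by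
  have h1 : Formula.K G χ ∈ edOf X0 t.1 := (gsim_K_iff hX0 h χ).mp hK
  exact mcs_mp_prov (mcs_edOf t.1 X0 hX0 t.2) Provable.axT h1

lemma gsim_Kh_iff {X0 : Set (Formula P n)} (hX0 : MCS X0) {G : Grp n} {s t : MSt X0}
    (h : gsim (myModel X0) G s t) (χ : Formula P n) :
    Formula.Kh G χ ∈ edOf X0 s.1 ↔ Formula.Kh G χ ∈ edOf X0 t.1 := by
  constructor
  · intro hm
    have h1 : Formula.K G (Formula.Kh G χ) ∈ edOf X0 s.1 :=
      mcs_mp_prov (mcs_edOf s.1 X0 hX0 s.2) Provable.axKhtoKKh hm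
    exact gsim_K_mem hX0 h h1
  · intro hm
    have h1 : Formula.K G (Formula.Kh G χ) ∈ edOf X0 t.1 :=
      mcs_mp_prov (mcs_edOf t.1 X0 hX0 t.2) Provable.axKhtoKKh hm
    exact gsim_K_mem hX0 (gsim_my_symm h) h1

end Model

section Witness

variable {P : Type} {n : ℕ}

open Formula

lemma extend_state {X0 : Set (Formula P n)} (s : MSt X0) (f : Formula P n) (G H : Grp n)
    (X : Set (Formula P n)) (hX : MCS X) (h1 : Formula.Kh G f ∈ edOf X0 s.1)
    (h2 : Formula.K G f ∈ X) (h3 : ∀ ψ, Formula.K H ψ ∈ edOf X0 s.1 → ψ ∈ X) :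
    Good X0 (s.1 ++ [(⟨f, G, H, X⟩ : CStep P n)]) :=
  (good_append s.1 ⟨f, G, H, X⟩).mpr ⟨s.2, hX, h1, h2, h3⟩

lemma lsim_append {X0 : Set (Formula P n)} (s : MSt X0) (c : CStep P n) (i : Fin n)
    (hi : i ∈ c.H) : lsim i s.1 (s.1 ++ [c]) := by
  refine ⟨s.1.length, le_rfl, by simp, ?_, ?_, ?_⟩
  · intro j hj
    have h1 : (s.1 ++ [c]).getD j default = s.1.getD j default := by
      simp only [List.getD_eq_getElem?_getD]
      rw [List.getElem?_append_left hj]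
    rw [h1]
    exact ⟨rfl, rfl⟩
  · intro j h1 h2; omega
  · intro j h1 h2
    have hj : j = s.1.length := by
      have := (List.length_append : (s.1 ++ [c]).length = _)
      simp at h2
      omega
    subst hj
    have h3 : (s.1 ++ [c]).getD s.1.length default = c := by
      simp [List.getD_eq_getElem?_getD]
    rw [h3]
    exact hi

lemma prov_K_top (G : Grp n) : Provable (Formula.K G (Formula.top : Formula P n)) :=
  Provable.necK (Provable.taut fun _ => rfl)

lemma prov_Kh_top (G : Grp n) : Provable (Formula.Kh G (Formula.top : Formula P n)) :=
  Provable.mp Provable.axKtoKh (prov_K_top G)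

/-- The key witness for the (⇒) direction of the K-truth-lemma. -/
lemma exists_neg_witness {X0 : Set (Formula P n)} (hX0 : MCS X0) (s : MSt X0) {G : Grp n}
    {φ : Formula P n} (h : Formula.K G φ ∉ edOf X0 s.1) :
    ∃ t : MSt X0, gsim (myModel X0) G s t ∧ φ ∉ edOf X0 t.1 := by
  have hedm : MCS (edOf X0 s.1) := mcs_edOf s.1 X0 hX0 s.2
  have hcons : Consistent (insert φ.neg {ψ | Formula.K G ψ ∈ edOf X0 s.1}) := by
    apply consistent_insert_neg
    rintro ⟨L, hL, hp⟩
    exact h (mcs_K_conj hedm hL hp)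
  obtain ⟨X, hsubX, hX⟩ := lindenbaum hcons
  have hKh : Formula.Kh G Formula.top ∈ edOf X0 s.1 := mcs_prov_mem hedm (prov_Kh_top G)
  have hKt : Formula.K G Formula.top ∈ X := mcs_prov_mem hX (prov_K_top G)
  have htr : ∀ ψ, Formula.K G ψ ∈ edOf X0 s.1 → ψ ∈ X := fun ψ hψ =>
    hsubX (Set.mem_insert_of_mem _ hψ)
  refine ⟨⟨s.1 ++ [⟨Formula.top, G, G, X⟩], extend_state s _ G G X hX hKh hKt htr⟩, ?_, ?_⟩
  · intro i hi
    exact lsim_append s _ i hi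
  · show φ ∉ edOf X0 (s.1 ++ [(⟨Formula.top, G, G, X⟩ : CStep P n)])
    rw [edOf_append]
    exact (mcs_neg_iff hX).mp (hsubX (Set.mem_insert _ _))

/-- Membership version of the truth condition for K. -/
lemma K_mem_iff {X0 : Set (Formula P n)} (hX0 : MCS X0) (s : MSt X0) (G : Grp n)
    (φ : Formula P n) :
    Formula.K G φ ∈ edOf X0 s.1 ↔ ∀ t : MSt X0, gsim (myModel X0) G s t → φ ∈ edOf X0 t.1 := by
  constructor
  · intro h t ht
    exact gsim_K_mem hX0 ht h
  · intro h
    by_contra hc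
    obtain ⟨t, h1, h2⟩ := exists_neg_witness hX0 s hc
    exact h2 (h t h1)

/-- Executability: consistency of `K_G φ` with the `K_∅`-consequences, given `Kh_G φ`. -/
lemma cons_insert_KG {Y : Set (Formula P n)} (hY : MCS Y) {G : Grp n} {φ : Formula P n}
    (hKh : Formula.Kh G φ ∈ Y) :
    Consistent (insert (Formula.K G φ) {χ | Formula.K (∅ : Grp n) χ ∈ Y}) := by
  rintro ⟨L, hL, hp⟩
  obtain ⟨L', hL', hch⟩ := extract_insert hL
  have hb : Provable ((conj ((Formula.K G φ) :: L')).imp Formula.bot) := prov_trans hch hp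
  have himp : Provable ((conj L').imp ((Formula.K G φ).imp Formula.bot)) :=
    Provable.mp (pl_impBot (Formula.K G φ) (conj L')) hb
  have h0 : Formula.K (∅ : Grp n) ((Formula.K G φ).imp Formula.bot) ∈ Y :=
    mcs_K_conj hY hL' himp
  have h1 : Formula.K (∅ : Grp n)
      ((Formula.Kh G (Formula.K G φ)).imp (Formula.Kh G Formula.bot)) ∈ Y :=
    mcs_mp_prov hY Provable.axEmpMono h0
  have h2 := mcs_mp_prov hY Provable.axT h1
  have h3 : Formula.Kh G (Formula.K G φ) ∈ Y := mcs_mp_prov hY Provable.axKhtoKhK hKh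
  have h4 : Formula.Kh G Formula.bot ∈ Y := mcs_mp hY h2 h3
  have h5 : Formula.bot ∈ Y := mcs_mp_prov hY Provable.axKhbot h4
  exact mcs_bot_not_mem hY h5

/-- If every MCS extending `K_{G''} ψ` plus the `K_∅`-consequences contains `Kh_G φ`,
then `Kh_G φ` is already in the set. -/
lemma kh_propagate {Y : Set (Formula P n)} (hY : MCS Y) {G'' G : Grp n} (hsub : G'' ⊆ G)
    {ψ φ : Formula P n} (hKh : Formula.Kh G'' ψ ∈ Y)
    (hincons : ¬ Consistent (insert (Formula.Kh G φ).neg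
      (insert (Formula.K G'' ψ) {χ | Formula.K (∅ : Grp n) χ ∈ Y}))) :
    Formula.Kh G φ ∈ Y := by
  rw [Consistent, not_not] at hincons
  obtain ⟨L, hL, hp⟩ := hincons
  obtain ⟨L1, hL1, hch1⟩ := extract_insert hL
  obtain ⟨L2, hL2, hch2⟩ := extract_insert hL1
  set a := Formula.K G'' ψ
  set b := Formula.Kh G φ
  have hsublist : ∀ x ∈ a :: L2, x ∈ a :: b.neg :: L2 := by
    intro x hx
    rcases List.mem_cons.mp hx with h | h
    · exact h ▸ List.mem_cons_self
    · exact List.mem_cons_of_mem _ (List.mem_cons_of_mem _ h)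
  have hAtoL1 : Provable ((conj (a :: b.neg :: L2)).imp (conj L1)) :=
    prov_trans (conj_mono hsublist) hch2
  have hto : Provable ((conj (a :: b.neg :: L2)).imp (conj (b.neg :: L1))) := by
    apply conj_intro
    intro x hx
    rcases List.mem_cons.mp hx with h | h
    · exact h ▸ conj_proj (List.mem_cons_of_mem _ (List.mem_cons_self))
    · exact prov_trans hAtoL1 (conj_proj h)
  have hbot : Provable ((conj (a :: b.neg :: L2)).imp Formula.bot) :=
    prov_trans hto (prov_trans hch1 hp)
  have himp : Provable ((conj L2).imp (a.imp b)) :=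
    Provable.mp (pl_impIntro2 a b (conj L2)) hbot
  have h0 : Formula.K (∅ : Grp n) (a.imp b) ∈ Y := mcs_K_conj hY hL2 himp
  have h1 : Formula.K (∅ : Grp n) ((Formula.Kh G'' a).imp (Formula.Kh G'' b)) ∈ Y :=
    mcs_mp_prov hY Provable.axEmpMono h0
  have h2 := mcs_mp_prov hY Provable.axT h1
  have h3 : Formula.Kh G'' a ∈ Y := mcs_mp_prov hY Provable.axKhtoKhK hKh
  have h4 : Formula.Kh G'' b ∈ Y := mcs_mp hY h2 h3
  have h5 : Formula.Kh G b ∈ Y := mcs_mp_prov hY (Provable.axKhMono hsub) h4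
  exact mcs_mp_prov hY Provable.axKhKh h5

/-- There are no distributed actions of the empty group. -/
lemma star_emptyG {d : DAct (CAct P n)} (h : star (cA (P := P) (n := n)) ∅ d) : False := by
  cases h with
  | base hsub hmem =>
    rename_i G' a
    rw [Finset.subset_empty] at hsub
    exact hmem.2 hsub
  | joint hlen hpp hchain hf =>
    rename_i Gs ds
    have hne : Gs ≠ [] := by
      intro h'
      rw [h'] at hlen
      simp at hlen
    obtain ⟨B, hB⟩ := List.exists_mem_of_ne_nil Gs hne
    have h1 : B ≠ ∅ := hpp.1 B hB
    have h2 : B ⊆ ∅ := hpp.2.2 B hB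
    exact h1 (Finset.subset_empty.mp h2)

/-- Every transition prescribed by a distributed action of `G` appends a single
step with acting group a nonempty subgroup of `G`. -/
lemma dtr_star_step {X0 : Set (Formula P n)} :
    ∀ (N : ℕ) (d : DAct (CAct P n)), sizeOf d ≤ N → ∀ (G : Grp n), star cA G d →
    ∀ (s u : MSt X0), dtr (mtr X0) d s u →
    ∃ c : CStep P n, u.1 = s.1 ++ [c] ∧ c.G ⊆ G ∧ c.G ≠ ∅ ∧ d = DAct.atom (c.fml, c.G) := by
  intro N
  induction N with
  | zero =>
    intro d hd
    exfalso
    cases d <;> simp at hd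
  | succ N ih =>
    intro d hd G hstar s u hdtr
    cases hstar with
    | base hsub hmem =>
      rename_i G' a
      obtain ⟨H, Y, hY⟩ := hdtr
      refine ⟨⟨a.1, a.2, H, Y⟩, hY, ?_, ?_, ?_⟩
      · show a.2 ⊆ G
        rw [hmem.1]
        exact hsub
      · show a.2 ≠ ∅
        rw [hmem.1]
        exact hmem.2
      · show DAct.atom a = DAct.atom (a.1, a.2)
        rw [Prod.mk.eta]
    | joint hlen hpp hchain hf =>
      rename_i Gs ds
      cases hf with
      | nil => simp at hlen
      | cons h1 hf' =>
        rename_i B0 d0 Gs' ds'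
        cases hf' with
        | nil => simp at hlen
        | cons h2 hf'' =>
          rename_i B1 d1 Gs'' ds''
          obtain ⟨hd0, hd1, _⟩ : dtr (mtr X0) d0 s u ∧ dtr (mtr X0) d1 s u ∧
              dtrList (mtr X0) ds'' s u := hdtr
          have hs0 : sizeOf d0 ≤ N := by
            have := hd
            simp only [DAct.joint.sizeOf_spec, List.cons.sizeOf_spec] at this
            omega
          have hs1 : sizeOf d1 ≤ N := by
            have := hd
            simp only [DAct.joint.sizeOf_spec, List.cons.sizeOf_spec] at this
            omega
          obtain ⟨c0, he0, hsub0, hne0, -⟩ := ih d0 hs0 B0 h1 s u hd0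
          obtain ⟨c1, he1, hsub1, hne1, -⟩ := ih d1 hs1 B1 h2 s u hd1
          have hceq : c0 = c1 := by
            have := he0.symm.trans he1
            have h3 := List.append_cancel_left this
            simpa using h3
          have hdisj : Disjoint B0 B1 := by
            have := List.pairwise_cons.mp hpp.2.1
            exact this.1 B1 (List.mem_cons_self)
          exfalso
          apply hne0
          rw [← Finset.subset_empty]
          intro x hx
          exact absurd (hsub1 (hceq ▸ hx)) (fun hB1 => Finset.disjoint_left.mp hdisj (hsub0 hx) hB1)

end Witness

section KhLemmas

variable {P : Type} {n : ℕ}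

open Formula

/-- The easy direction of the Kh truth lemma: build a strategy from `Kh_G φ ∈ ed(s)`. -/
lemma kh_strategy {X0 : Set (Formula P n)} (hX0 : MCS X0) {G : Grp n} {φ : Formula P n}
    (s : MSt X0) (hKh : Formula.Kh G φ ∈ edOf X0 s.1) :
    ∃ σ : Strategy (myModel X0) G,
      (∀ t ∈ CELeaf σ s, φ ∈ edOf X0 t.1) ∧ ¬ InfiniteFrom σ s := by
  classical
  set C : MSt X0 → Prop := fun t =>
    G ≠ ∅ ∧ Formula.Kh G φ ∈ edOf X0 t.1 ∧ Formula.K G φ ∉ edOf X0 t.1 with hC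
  have hCinv : ∀ t t' : MSt X0, gsim (myModel X0) G t t' → (C t ↔ C t') := by
    intro t t' h
    simp only [hC]
    rw [gsim_Kh_iff hX0 h φ, gsim_K_iff hX0 h φ]
  let act : MSt X0 → Option (DAct (CAct P n)) := fun t =>
    if C t then some (.atom (φ, G)) else none
  have hact_some : ∀ t d, act t = some d → C t ∧ d = DAct.atom (φ, G) := by
    intro t d hd
    by_cases hc : C t
    · refine ⟨hc, ?_⟩
      simp only [act, if_pos hc] at hd
      exact (Option.some.inj hd).symm
    · simp only [act, if_neg hc] at hd
      cases hd
  have huni : ∀ t t' : MSt X0, gsim (myModel X0) G t t' → act t = act t' := by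
    intro t t' h
    by_cases hc : C t
    · rw [show act t = some (.atom (φ, G)) from if_pos hc,
        show act t' = some (.atom (φ, G)) from if_pos ((hCinv t t' h).mp hc)]
    · rw [show act t = none from if_neg hc,
        show act t' = none from if_neg (fun hc' => hc ((hCinv t t' h).mpr hc'))]
  have hmemstar : ∀ (t : MSt X0) d, act t = some d → star cA G d := by
    intro t d hd
    obtain ⟨hc, rfl⟩ := hact_some t d hd
    exact star.base (Finset.Subset.refl G) ⟨rfl, hc.1⟩
  have hexec : ∀ (t : MSt X0) d, act t = some d → ∀ t' : MSt X0,
      gsim (myModel X0) G t t' → ∃ u, dtr (mtr X0) d t' u := by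
    intro t d hd t' hsim
    obtain ⟨hc, rfl⟩ := hact_some t d hd
    have hedm' : MCS (edOf X0 t'.1) := mcs_edOf t'.1 X0 hX0 t'.2
    have hKh' : Formula.Kh G φ ∈ edOf X0 t'.1 := (gsim_Kh_iff hX0 hsim φ).mp hc.2.1
    obtain ⟨X, hsubX, hX⟩ := lindenbaum (cons_insert_KG hedm' hKh')
    have hgood : Good X0 (t'.1 ++ [(⟨φ, G, ∅, X⟩ : CStep P n)]) :=
      extend_state t' φ G ∅ X hX hKh' (hsubX (Set.mem_insert _ _))
        (fun χ hχ => hsubX (Set.mem_insert_of_mem _ hχ))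
    exact ⟨⟨t'.1 ++ [⟨φ, G, ∅, X⟩], hgood⟩, ∅, X, rfl⟩
  let σ : Strategy (myModel X0) G := ⟨act, huni, hmemstar, hexec⟩
  have hstepK : ∀ t t' : MSt X0, stepRel σ t t' → Formula.K G φ ∈ edOf X0 t'.1 := by
    rintro t t' ⟨d, hd, u, v, hu, hv, hdtr⟩
    obtain ⟨hc, rfl⟩ := hact_some t d hd
    obtain ⟨H, Y, hY⟩ := hdtr
    have hgv : Good X0 (u.1 ++ [(⟨φ, G, H, Y⟩ : CStep P n)]) := by
      have := v.2
      rwa [hY] at this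
    have hKv : Formula.K G φ ∈ edOf X0 v.1 := by
      rw [hY, edOf_append]
      exact ((good_append u.1 _).mp hgv).2.2.2.1
    exact (gsim_K_iff hX0 hv φ).mpr hKv
  refine ⟨σ, ?_, ?_⟩
  · rintro t ⟨m, f, hf0, hfs, hfm, hft⟩
    have hinv : ∀ j, j ≤ m → Formula.Kh G φ ∈ edOf X0 (f j).1 := by
      intro j
      induction j with
      | zero => intro _; exact (gsim_Kh_iff hX0 hf0 φ).mp hKh
      | succ j ih =>
        intro hj
        have hK := hstepK (f j) (f (j + 1)) (hfs j (by omega))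
        exact mcs_mp_prov (mcs_edOf (f (j+1)).1 X0 hX0 (f (j+1)).2) Provable.axKtoKh hK
    have hKhm : Formula.Kh G φ ∈ edOf X0 (f m).1 := hinv m le_rfl
    have hedm : MCS (edOf X0 (f m).1) := mcs_edOf (f m).1 X0 hX0 (f m).2
    have hnC : ¬ C (f m) := by
      intro hc
      rw [show σ.act (f m) = act (f m) from rfl, show act (f m) = some (.atom (φ, G)) from if_pos hc] at hfm
      cases hfm
    have hKm : Formula.K G φ ∈ edOf X0 (f m).1 := by
      by_cases hG : G = ∅
      · subst hG
        exact mcs_mp_prov hedm Provable.axEmpKhtoK hKhm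
      · by_contra hK
        exact hnC ⟨hG, hKhm, hK⟩
    exact gsim_K_mem hX0 hft hKm
  · rintro ⟨f, hf0, hfs⟩
    have hK1 : Formula.K G φ ∈ edOf X0 (f 1).1 := hstepK (f 0) (f 1) (hfs 0)
    obtain ⟨d, hd, -⟩ := hfs 1
    obtain ⟨hc, -⟩ := hact_some (f 1) d hd
    exact hc.2.2 hK1

/-- The hard direction of the Kh truth lemma. -/
lemma kh_sound {X0 : Set (Formula P n)} (hX0 : MCS X0) {G : Grp n} {φ : Formula P n}
    (s : MSt X0) (σ : Strategy (myModel X0) G)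
    (hleaf : ∀ t ∈ CELeaf σ s, φ ∈ edOf X0 t.1)
    (hfin : ¬ InfiniteFrom σ s) : Formula.Kh G φ ∈ edOf X0 s.1 := by
  classical
  by_contra hKh
  set Bad : MSt X0 → Prop := fun t => (Formula.Kh G φ ∉ edOf X0 t.1) ∧
    ∃ (m : ℕ) (f : ℕ → MSt X0), gsim (myModel X0) G s (f 0) ∧
      (∀ j < m, stepRel σ (f j) (f (j+1))) ∧ gsim (myModel X0) G (f m) t with hBad
  have hbase : Bad s := ⟨hKh, 0, fun _ => s, gsim_my_refl s, by omega, gsim_my_refl s⟩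
  have hstep : ∀ t, Bad t → ∃ u, stepRel σ t u ∧ Bad u := by
    rintro t ⟨hKht, m, f, hf0, hfs, hfm⟩
    have hedm : MCS (edOf X0 t.1) := mcs_edOf t.1 X0 hX0 t.2
    have hact : ∃ d, σ.act t = some d := by
      cases hAt : σ.act t with
      | some d => exact ⟨d, rfl⟩
      | none =>
        exfalso
        have hleaft : ∀ t' : MSt X0, gsim (myModel X0) G t t' → φ ∈ edOf X0 t'.1 := by
          intro t' ht'
          apply hleaf
          refine ⟨m, f, hf0, hfs, ?_, gsim_my_trans hfm ht'⟩
          rw [σ.uniform (f m) t hfm]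
          exact hAt
        have hKG : Formula.K G φ ∈ edOf X0 t.1 := (K_mem_iff hX0 t G φ).mpr hleaft
        exact hKht (mcs_mp_prov hedm Provable.axKtoKh hKG)
    obtain ⟨d, hd⟩ := hact
    have hstar : star cA G d := σ.mem_star t d hd
    obtain ⟨u0, hu0⟩ := σ.exec t d hd t (gsim_my_refl t)
    obtain ⟨c0, he0, hsub0, hne0, hdatom⟩ :=
      dtr_star_step (X0 := X0) (sizeOf (show DAct (CAct P n) from d))
        d le_rfl G hstar t u0 hu0
    set ψ := c0.fml
    set G'' := c0.G
    -- Kh_{G''} ψ ∈ ed t, from goodness of u0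
    have hgu0 : Good X0 (t.1 ++ [c0]) := by
      have := u0.2
      rwa [he0] at this
    have hKhψ : Formula.Kh G'' ψ ∈ edOf X0 t.1 := ((good_append t.1 c0).mp hgu0).2.2.1
    by_cases hcons : Consistent (insert (Formula.Kh G φ).neg
        (insert (Formula.K G'' ψ) {χ | Formula.K (∅ : Grp n) χ ∈ edOf X0 t.1}))
    · obtain ⟨X, hsubX, hX⟩ := lindenbaum hcons
      have hgood : Good X0 (t.1 ++ [(⟨ψ, G'', ∅, X⟩ : CStep P n)]) :=
        extend_state t ψ G'' ∅ X hX hKhψ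
          (hsubX (Set.mem_insert_of_mem _ (Set.mem_insert _ _)))
          (fun χ hχ => hsubX (Set.mem_insert_of_mem _ (Set.mem_insert_of_mem _ hχ)))
      set u : MSt X0 := ⟨t.1 ++ [⟨ψ, G'', ∅, X⟩], hgood⟩ with hu
      have hdtru : dtr (mtr X0) d t u := by
        rw [hdatom]
        exact ⟨∅, X, rfl⟩
      have hsr : stepRel σ t u := ⟨d, hd, t, u, gsim_my_refl t, gsim_my_refl u, hdtru⟩
      refine ⟨u, hsr, ?_, ?_⟩
      · show Formula.Kh G φ ∉ edOf X0 u.1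
        rw [show edOf X0 u.1 = X from edOf_append X0 t.1 _]
        exact (mcs_neg_iff hX).mp (hsubX (Set.mem_insert _ _))
      · refine ⟨m + 1, fun j => if j < m + 1 then f j else u, ?_, ?_, ?_⟩
        · simpa using hf0
        · intro j hj
          show stepRel σ (if j < m + 1 then f j else u) (if j + 1 < m + 1 then f (j+1) else u)
          by_cases hjm : j < m
          · have h1 : (if j < m + 1 then f j else u) = f j := if_pos (by omega)
            have h2 : (if j + 1 < m + 1 then f (j+1) else u) = f (j + 1) := if_pos (by omega)
            simp only [show j < m + 1 from by omega, show j + 1 < m + 1 from by omega, if_true]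
            exact hfs j hjm
          · have hjeq : j = m := by omega
            subst hjeq
            have h1 : (if j < j + 1 then f j else u) = f j := if_pos (by omega)
            have h2 : (if j + 1 < j + 1 then f (j+1) else u) = u := if_neg (by omega)
            simp only [show j < j + 1 from by omega, show ¬ (j + 1 < j + 1) from by omega, if_true, if_false]
            have hactm : σ.act (f j) = some d := by
              rw [σ.uniform (f j) t hfm]
              exact hd
            exact ⟨d, hactm, t, u, hfm, gsim_my_refl u, hdtru⟩
        · show gsim (myModel X0) G (if m + 1 < m + 1 then f (m+1) else u) u
          have h2 : (if m + 1 < m + 1 then f (m+1) else u) = u := if_neg (by omega)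
          simp only [show ¬ (m + 1 < m + 1) from by omega, if_false]
          exact gsim_my_refl u
    · exact absurd (kh_propagate hedm hsub0 hKhψ hcons) hKht
  -- dependent choice: build an infinite execution
  have hnext : ∀ t : {t : MSt X0 // Bad t}, ∃ u : {t : MSt X0 // Bad t}, stepRel σ t.1 u.1 := by
    intro t
    obtain ⟨u, hsu, hbu⟩ := hstep t.1 t.2
    exact ⟨⟨u, hbu⟩, hsu⟩
  choose nxt hnxt using hnext
  let g : ℕ → {t : MSt X0 // Bad t} := fun k => Nat.rec ⟨s, hbase⟩ (fun _ p => nxt p) k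
  have hg : ∀ j, stepRel σ (g j).1 (g (j+1)).1 := fun j => hnxt (g j)
  exact hfin ⟨fun j => (g j).1, gsim_my_refl s, hg⟩

/-- The truth lemma. -/
lemma truth_lemma {X0 : Set (Formula P n)} (hX0 : MCS X0) :
    ∀ (φ : Formula P n) (s : MSt X0), Sat (myModel X0) s φ ↔ φ ∈ edOf X0 s.1 := by
  intro φ
  induction φ with
  | top =>
    intro s
    simp only [Sat, true_iff]
    exact mcs_prov_mem (mcs_edOf s.1 X0 hX0 s.2) (Provable.taut fun _ => rfl)
  | atom p => intro s; exact Iff.rfl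
  | neg ψ ih =>
    intro s
    rw [show Sat (myModel X0) s ψ.neg ↔ ¬ Sat (myModel X0) s ψ from Iff.rfl, ih s,
      mcs_neg_iff (mcs_edOf s.1 X0 hX0 s.2)]
  | and ψ χ ih1 ih2 =>
    intro s
    rw [show Sat (myModel X0) s (ψ.and χ) ↔ Sat (myModel X0) s ψ ∧ Sat (myModel X0) s χ
      from Iff.rfl, ih1 s, ih2 s, mcs_and_iff (mcs_edOf s.1 X0 hX0 s.2)]
  | K G ψ ih =>
    intro s
    rw [show Sat (myModel X0) s (Formula.K G ψ) ↔
      (∀ t, gsim (myModel X0) G s t → Sat (myModel X0) t ψ) from Iff.rfl,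
      K_mem_iff hX0 s G ψ]
    exact forall_congr' fun t => imp_congr Iff.rfl (ih t)
  | Kh G ψ ih =>
    intro s
    rw [show Sat (myModel X0) s (Formula.Kh G ψ) ↔
      (∃ σ : Strategy (myModel X0) G,
        (∀ t ∈ CELeaf σ s, Sat (myModel X0) t ψ) ∧ ¬ InfiniteFrom σ s) from Iff.rfl]
    constructor
    · rintro ⟨σ, h1, h2⟩
      exact kh_sound hX0 s σ (fun t ht => (ih t).mp (h1 t ht)) h2
    · intro h
      obtain ⟨σ, h1, h2⟩ := kh_strategy hX0 s h
      exact ⟨σ, fun t ht => (ih t).mpr (h1 t ht), h2⟩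

end KhLemmas

/-- Strong completeness of SDKH: every SDKH-consistent set of
formulas is satisfiable in some pointed model; equivalently, semantic
entailment implies derivability in SDKH. -/
theorem strong_completeness {P : Type} [Countable P] {n : ℕ} :
    (∀ Γ : Set (Formula P n), Consistent Γ →
      ∃ (M : KhModel P n) (s : M.State), ∀ φ ∈ Γ, Sat M s φ) ∧
    (∀ (Γ : Set (Formula P n)) (φ : Formula P n),
      (∀ (M : KhModel P n) (s : M.State), (∀ ψ ∈ Γ, Sat M s ψ) → Sat M s φ) →
      ∃ L : List (Formula P n), (∀ ψ ∈ L, ψ ∈ Γ) ∧ Provable ((conj L).imp φ)) := by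
  constructor
  · intro Γ hΓ
    obtain ⟨X0, hsub, hX0⟩ := lindenbaum hΓ
    refine ⟨myModel X0, (⟨[], trivial⟩ : MSt X0), ?_⟩
    intro φ hφ
    exact (truth_lemma hX0 φ ⟨[], trivial⟩).mpr (hsub hφ)
  · intro Γ φ hent
    by_contra hL
    have hcons : Consistent (insert φ.neg Γ) := consistent_insert_neg hL
    obtain ⟨X0, hsub, hX0⟩ := lindenbaum hcons
    have hsat : ∀ ψ ∈ Γ, Sat (myModel X0) (⟨[], trivial⟩ : MSt X0) ψ := fun ψ hψ =>
      (truth_lemma hX0 ψ ⟨[], trivial⟩).mpr (hsub (Set.mem_insert_of_mem _ hψ))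
    have hφ : Sat (myModel X0) (⟨[], trivial⟩ : MSt X0) φ := hent (myModel X0) (⟨[], trivial⟩ : MSt X0) hsat
    have hneg : Formula.neg φ ∈ X0 := hsub (Set.mem_insert _ _)
    have hnot : ¬ Sat (myModel X0) (⟨[], trivial⟩ : MSt X0) φ := by
      rw [truth_lemma hX0 φ ⟨[], trivial⟩]
      exact (mcs_neg_iff hX0).mp hneg
    exact hnot hφ

end DKH
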